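/- Fix l ∈ [0, 1/4], a budget C ∈ ℕ, and for each item i ∈ I: a probability distribution p_i on states {1,…,B}, costs c_i : {1,…,B} → ℕ that are nondecreasing in the state, and nonnegative reals y(i,t) for t ∈ {1,…,C − c_i(B)} with ȳ(i) := Σ_t y(i,t) ≤ 1. Assume that for every k ∈ {1,…,C}: Σ_{i∈I} (Σ_{s=1}^B p_i(s)·min{c_i(s), k}) · (Σ_{t'=1}^k y(i,t')) ≤ 2·l·k. Consider the random experiment where, independently for each item i, with probability y(i,t)·p_i(s) item i is active with start time t and state s (for each admissible t and s), and with probability 1 − ȳ(i) item i is inactive. Then for every item i ∈ I and every k ∈ {1,…,C}: Pr[ Σ_{i' ≠ i : i' active and t(i') ≤ k} min{c_{i'}(s(i')), k} ≤ k ] ≥ 1 − 2l. -/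

import Mathlib

open Finset

/-- The outcome of a single item in the random experiment: an element of
`Fin (C+1) × Fin (B+1)`, where `(0, 0)` encodes "inactive" and `(t, s)` with `t ≠ 0`,
`s ≠ 0` encodes "active with start time `t` and state `s`".  The item is inactive with
probability `1 - ȳ i` and active with start time `t` and state `s` with probability
`y i t * p i s`. -/
def outcomeProb {I : Type} (C B : ℕ) (y : I → ℕ → ℝ) (p : I → ℕ → ℝ) (i : I)
    (o : Fin (C + 1) × Fin (B + 1)) : ℝ :=
  if o.1 = 0 then
    (if o.2 = 0 then 1 - ∑ t ∈ Finset.Icc 1 C, y i t else 0)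
  else
    (if o.2 = 0 then 0 else y i (o.1 : ℕ) * p i (o.2 : ℕ))

lemma sum_fin_coe (n : ℕ) (f : ℕ → ℝ) :
    ∑ t : Fin (n+1), f (t : ℕ) = f 0 + ∑ t ∈ Finset.Icc 1 n, f t := by
  rw [Fin.sum_univ_succ]
  congr 1
  rw [show (Finset.Icc 1 n) = Finset.Ico 1 (n+1) from (Finset.Ico_add_one_right_eq_Icc 1 n),
    Finset.sum_Ico_eq_sum_range]
  simp only [Nat.add_sub_cancel, Fin.val_succ]
  rw [← Fin.sum_univ_eq_sum_range (fun m => f (1 + m)) n]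
  simp [add_comm]

lemma outcomeProb_weighted_sum {I : Type} (C B : ℕ) (y p : I → ℕ → ℝ) (j : I)
    (G : ℕ → ℕ → ℝ) :
    ∑ a : Fin (C+1) × Fin (B+1), outcomeProb C B y p j a * G (a.1 : ℕ) (a.2 : ℕ)
      = (1 - ∑ t ∈ Finset.Icc 1 C, y j t) * G 0 0
        + ∑ t ∈ Finset.Icc 1 C, ∑ s ∈ Finset.Icc 1 B, y j t * p j s * G t s := by
  set F : ℕ → ℕ → ℝ := fun t s =>
    (if t = 0 then (if s = 0 then (1 - ∑ t ∈ Finset.Icc 1 C, y j t) else 0)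
      else if s = 0 then 0 else y j t * p j s) * G t s with hF
  have key : ∀ (t : Fin (C+1)) (s : Fin (B+1)),
      outcomeProb C B y p j (t, s) * G (t:ℕ) (s:ℕ) = F (t:ℕ) (s:ℕ) := by
    intro t s
    simp only [outcomeProb, hF, Fin.ext_iff, Fin.val_zero]
  rw [Fintype.sum_prod_type]
  simp only [key]
  have inner : ∀ tn : ℕ, ∑ s : Fin (B+1), F tn (s:ℕ) = F tn 0 + ∑ s ∈ Finset.Icc 1 B, F tn s :=
    fun tn => sum_fin_coe B (F tn)
  simp only [inner]
  rw [sum_fin_coe C (fun tn => F tn 0 + ∑ s ∈ Finset.Icc 1 B, F tn s)]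
  have h00 : F 0 0 = (1 - ∑ t ∈ Finset.Icc 1 C, y j t) * G 0 0 := by simp [hF]
  have h0s : ∀ s ∈ Finset.Icc 1 B, F 0 s = 0 := by
    intro s hs
    rw [Finset.mem_Icc] at hs
    simp [hF]; omega
  have hts : ∀ t ∈ Finset.Icc 1 C, (F t 0 + ∑ s ∈ Finset.Icc 1 B, F t s)
      = ∑ s ∈ Finset.Icc 1 B, y j t * p j s * G t s := by
    intro t ht
    rw [Finset.mem_Icc] at ht
    have ht0 : t ≠ 0 := by omega
    have : F t 0 = 0 := by simp [hF, ht0]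
    rw [this, zero_add]
    refine Finset.sum_congr rfl (fun s hs => ?_)
    rw [Finset.mem_Icc] at hs
    have hs0 : s ≠ 0 := by omega
    simp [hF, ht0, hs0]
  rw [Finset.sum_eq_zero h0s, h00, add_zero, Finset.sum_congr rfl hts]

lemma sum_univ_prod {I A : Type} [Fintype I] [DecidableEq I] [Fintype A] (f : I → A → ℝ) :
    ∑ ω : I → A, ∏ j, f j (ω j) = ∏ j, ∑ a, f j a := by
  rw [Finset.prod_univ_sum]
  rw [Fintype.piFinset_univ]


/-- Suppose the fractional solution `y` satisfies the time-indexed budget constraints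
`∑_i (∑_s p i s * min (c i s) k) * (∑_{t' ≤ k} y i t') ≤ 2 l k` for every `k ∈ {1,…,C}`,
where the costs `c i` are nondecreasing in the state.  Then, in the experiment where
each item is independently active with start time `t` and state `s` with probability
`y i t * p i s` (and inactive otherwise), for every item `i` and every `k ∈ {1,…,C}`,
with probability at least `1 - 2l` the total truncated cost of the active items
`i' ≠ i` with start time at most `k` is at most `k`. -/
theorem truncated_cost_le_budget_prob {I : Type} [Fintype I] [DecidableEq I]
    (B C : ℕ) (hB : 0 < B) (hC : 0 < C)
    (l : ℝ) (hl : l ∈ Set.Icc (0 : ℝ) (1 / 4))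
    (p : I → ℕ → ℝ) (hpn : ∀ i s, 0 ≤ p i s)
    (hpsupp : ∀ i s, s ∉ Finset.Icc 1 B → p i s = 0)
    (hps : ∀ i, ∑ s ∈ Finset.Icc 1 B, p i s = 1)
    (c : I → ℕ → ℕ)
    (hc : ∀ i, ∀ s ∈ Finset.Icc 1 B, ∀ s' ∈ Finset.Icc 1 B, s' ≤ s → c i s' ≤ c i s)
    (y : I → ℕ → ℝ) (hyn : ∀ i t, 0 ≤ y i t)
    (hysupp : ∀ i t, t ∉ Finset.Icc 1 (C - c i B) → y i t = 0)
    (hybar : ∀ i, ∑ t ∈ Finset.Icc 1 C, y i t ≤ 1)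
    (hcon : ∀ k ∈ Finset.Icc 1 C,
      ∑ i, (∑ s ∈ Finset.Icc 1 B, p i s * (min (c i s) k : ℝ)) *
          (∑ t' ∈ Finset.Icc 1 k, y i t') ≤ 2 * l * (k : ℝ)) :
    ∀ i : I, ∀ k ∈ Finset.Icc 1 C,
      (∑ ω : I → Fin (C + 1) × Fin (B + 1),
        if (∑ i' ∈ Finset.univ.erase i,
              (if (ω i').1 ≠ 0 ∧ ((ω i').1 : ℕ) ≤ k
                then min (c i' ((ω i').2 : ℕ)) k else 0)) ≤ k
          then ∏ i', outcomeProb C B y p i' (ω i') else 0) ≥ 1 - 2 * l := by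
  intro i k hk
  have hkk := hk
  rw [Finset.mem_Icc] at hkk
  set A := (Fin (C + 1) × Fin (B + 1)) with hA
  set w : I → A → ℝ := outcomeProb C B y p with hw
  set X : (I → A) → ℕ := fun ω => ∑ i' ∈ Finset.univ.erase i,
      (if (ω i').1 ≠ 0 ∧ ((ω i').1 : ℕ) ≤ k
        then min (c i' ((ω i').2 : ℕ)) k else 0) with hX
  -- nonnegativity of weights
  have hwn : ∀ (j : I) (a : A), 0 ≤ w j a := by
    intro j a
    simp only [hw, outcomeProb]
    split_ifs
    · linarith [hybar j]
    · exact le_refl 0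
    · exact le_refl 0
    · exact mul_nonneg (hyn _ _) (hpn _ _)
  have hprod_nonneg : ∀ ω : I → A, 0 ≤ ∏ j, w j (ω j) :=
    fun ω => Finset.prod_nonneg fun j _ => hwn j (ω j)
  -- marginals sum to 1
  have marg1 : ∀ j : I, ∑ a : A, w j a = 1 := by
    intro j
    have h := outcomeProb_weighted_sum C B y p j (fun _ _ => 1)
    simp only [mul_one] at h
    rw [hw, h]
    have hstep : ∀ t ∈ Finset.Icc 1 C, ∑ s ∈ Finset.Icc 1 B, y j t * p j s = y j t := by
      intro t _
      rw [← Finset.mul_sum, hps j, mul_one]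
    rw [Finset.sum_congr rfl hstep]
    ring
  -- expected truncated cost of each item
  set M : I → ℝ := fun j => ∑ s ∈ Finset.Icc 1 B, p j s * (min (c j s) k : ℝ) with hM
  set g : I → A → ℝ := fun j a =>
      if a.1 ≠ 0 ∧ (a.1 : ℕ) ≤ k then ((min (c j (a.2 : ℕ)) k : ℕ) : ℝ) else 0 with hg
  have hMn : ∀ j, 0 ≤ M j := by
    intro j
    exact Finset.sum_nonneg fun s _ => mul_nonneg (hpn _ _) (by positivity)
  have hmu : ∀ j : I, ∑ a : A, w j a * g j a = M j * ∑ t ∈ Finset.Icc 1 k, y j t := by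
    intro j
    have h := outcomeProb_weighted_sum C B y p j
      (fun t s => if t ≠ 0 ∧ t ≤ k then ((min (c j s) k : ℕ) : ℝ) else 0)
    have hLHS : ∑ a : A, w j a * g j a
        = ∑ a : A, outcomeProb C B y p j a *
            (fun t s => if t ≠ 0 ∧ t ≤ k then ((min (c j s) k : ℕ) : ℝ) else 0)
              (a.1 : ℕ) (a.2 : ℕ) := by
      refine Finset.sum_congr rfl fun a _ => ?_
      have hiff : (a.1 ≠ 0 ∧ (a.1 : ℕ) ≤ k) ↔ ((a.1 : ℕ) ≠ 0 ∧ (a.1 : ℕ) ≤ k) := by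
        simp only [ne_eq, Fin.ext_iff, Fin.val_zero]
      exact congrArg _ (if_congr hiff rfl rfl)
    rw [hLHS, h]
    simp only [ne_eq, not_true_eq_false, false_and, if_false, mul_zero, zero_add]
    have hstep : ∀ t ∈ Finset.Icc 1 C,
        (∑ s ∈ Finset.Icc 1 B, y j t * p j s *
          (if t ≠ 0 ∧ t ≤ k then ((min (c j s) k : ℕ) : ℝ) else 0))
        = if t ≤ k then y j t * M j else 0 := by
      intro t ht
      rw [Finset.mem_Icc] at ht
      have ht0 : t ≠ 0 := by omega
      by_cases htk : t ≤ k
      · rw [if_pos htk, hM, Finset.mul_sum]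
        refine Finset.sum_congr rfl fun s _ => ?_
        rw [if_pos ⟨ht0, htk⟩]
        push_cast
        ring
      · simp [htk]
    rw [Finset.sum_congr rfl hstep, ← Finset.sum_filter]
    have hfil : (Finset.Icc 1 C).filter (fun t => t ≤ k) = Finset.Icc 1 k := by
      ext t
      simp only [Finset.mem_filter, Finset.mem_Icc]
      omega
    rw [hfil, ← Finset.sum_mul, mul_comm]
  -- total probability is 1
  have htot : ∑ ω : I → A, ∏ j, w j (ω j) = 1 := by
    rw [sum_univ_prod, Finset.prod_congr rfl (fun j _ => marg1 j), Finset.prod_const_one]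
  -- expectation computation
  have hE : ∑ ω : I → A, (∑ i' ∈ Finset.univ.erase i, g i' (ω i')) * ∏ j, w j (ω j)
      = ∑ i' ∈ Finset.univ.erase i, M i' * ∑ t ∈ Finset.Icc 1 k, y i' t := by
    simp only [Finset.sum_mul]
    rw [Finset.sum_comm]
    refine Finset.sum_congr rfl fun i' _ => ?_
    set f : I → A → ℝ := fun j a => if j = i' then w j a * g j a else w j a with hf
    have key : ∀ ω : I → A, g i' (ω i') * ∏ j, w j (ω j) = ∏ j, f j (ω j) := by
      intro ω
      rw [← Finset.mul_prod_erase Finset.univ (fun j => w j (ω j)) (Finset.mem_univ i'),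
        ← Finset.mul_prod_erase Finset.univ (fun j => f j (ω j)) (Finset.mem_univ i')]
      have hfi : f i' (ω i') = w i' (ω i') * g i' (ω i') := by simp [hf]
      have hfo : ∀ j ∈ Finset.univ.erase i', f j (ω j) = w j (ω j) := by
        intro j hj
        simp [hf, Finset.ne_of_mem_erase hj]
      rw [hfi, Finset.prod_congr rfl hfo]
      ring
    rw [Finset.sum_congr rfl fun ω _ => key ω, sum_univ_prod f,
      ← Finset.mul_prod_erase Finset.univ _ (Finset.mem_univ i')]
    have h1 : (∑ a : A, f i' a) = M i' * ∑ t ∈ Finset.Icc 1 k, y i' t := by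
      rw [show (∑ a : A, f i' a) = ∑ a : A, w i' a * g i' a from
        Finset.sum_congr rfl fun a _ => by simp [hf]]
      exact hmu i'
    have h2 : ∀ j ∈ Finset.univ.erase i', (∑ a : A, f j a) = 1 := by
      intro j hj
      rw [show (∑ a : A, f j a) = ∑ a : A, w j a from
        Finset.sum_congr rfl fun a _ => by simp [hf, Finset.ne_of_mem_erase hj]]
      exact marg1 j
    rw [h1, Finset.prod_congr rfl h2, Finset.prod_const_one, mul_one]
  -- cast of X
  have hcast : ∀ ω : I → A, (X ω : ℝ) = ∑ i' ∈ Finset.univ.erase i, g i' (ω i') := by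
    intro ω
    rw [hX]
    push_cast
    refine Finset.sum_congr rfl fun i' _ => ?_
    simp [hg, apply_ite (Nat.cast : ℕ → ℝ)]
  -- expectation bound
  have hS2 : ∑ ω : I → A, (X ω : ℝ) * ∏ j, w j (ω j) ≤ 2 * l * k := by
    rw [Finset.sum_congr rfl fun ω _ => by rw [hcast ω], hE]
    refine le_trans (Finset.sum_le_sum_of_subset_of_nonneg
      (Finset.erase_subset _ _) (fun j _ _ => mul_nonneg (hMn j)
        (Finset.sum_nonneg fun t _ => hyn j t))) ?_
    exact hcon k hk
  have hS2n : 0 ≤ ∑ ω : I → A, (X ω : ℝ) * ∏ j, w j (ω j) :=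
    Finset.sum_nonneg fun ω _ => mul_nonneg (by positivity) (hprod_nonneg ω)
  -- pointwise Markov bound
  have point : ∀ ω : I → A,
      ∏ j, w j (ω j) - (X ω : ℝ) / (k + 1) * ∏ j, w j (ω j)
        ≤ (if X ω ≤ k then ∏ j, w j (ω j) else 0) := by
    intro ω
    have hk1 : (0 : ℝ) < (k : ℝ) + 1 := by positivity
    by_cases h : X ω ≤ k
    · rw [if_pos h]
      have h0 : 0 ≤ (X ω : ℝ) / (k + 1) * ∏ j, w j (ω j) := by
        have := hprod_nonneg ω
        positivity
      linarith
    · rw [if_neg h]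
      have hx : (k : ℝ) + 1 ≤ (X ω : ℝ) := by
        have : k + 1 ≤ X ω := by omega
        exact_mod_cast this
      have h1 : 1 ≤ (X ω : ℝ) / (k + 1) := (one_le_div hk1).mpr hx
      nlinarith [hprod_nonneg ω]
  -- put everything together
  have hk1 : (0 : ℝ) < (k : ℝ) + 1 := by positivity
  have hsum : ∑ ω : I → A, (∏ j, w j (ω j) - (X ω : ℝ) / (k + 1) * ∏ j, w j (ω j))
      ≤ ∑ ω : I → A, (if X ω ≤ k then ∏ j, w j (ω j) else 0) :=
    Finset.sum_le_sum fun ω _ => point ω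
  have hrw : ∑ ω : I → A, (∏ j, w j (ω j) - (X ω : ℝ) / (k + 1) * ∏ j, w j (ω j))
      = 1 - (∑ ω : I → A, (X ω : ℝ) * ∏ j, w j (ω j)) / (k + 1) := by
    rw [Finset.sum_sub_distrib, htot, Finset.sum_div]
    congr 1
    refine Finset.sum_congr rfl fun ω _ => ?_
    ring
  have hdiv : (∑ ω : I → A, (X ω : ℝ) * ∏ j, w j (ω j)) / (k + 1) ≤ 2 * l := by
    rw [div_le_iff₀ hk1]
    have hl0 : 0 ≤ l := hl.1
    have : 2 * l * (k : ℝ) ≤ 2 * l * ((k : ℝ) + 1) := by nlinarith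
    linarith [hS2]
  have main : (∑ ω : I → A, if X ω ≤ k then ∏ j, w j (ω j) else 0) ≥ 1 - 2 * l := by
    rw [hrw] at hsum
    linarith
  exact main
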